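/- arXiv:1910.03988 — 2 statements merged into one kernel-verified Lean document; each statement's English description precedes it below -/
import Mathlib

section
/- Let ε ∈ ℂ, let B, C : ℝ → ℂ, let g : ℝ → ℝ be twice differentiable, let f : ℝ → ℂ be twice differentiable, and let ψ : ℝ → ℂ be twice differentiable and satisfy ε ψ''(y) = B(y) ψ(y) for all y ∈ ℝ. Suppose that for all x ∈ ℝ: B(g(x)) · g'(x)² = C(x) and 2 f'(x) g'(x) + f(x) g''(x) = 0. Then the function φ(x) := f(x) · ψ(g(x)) satisfies −ε φ''(x) + C(x) φ(x) = −ε f''(x) ψ(g(x)) for all x ∈ ℝ. -/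
/-- Langer's transformation: if `ψ` solves `ε ψ'' = B ψ`, the phase `g` solves
`B(g) g'² = C` and the amplitude `f` solves `2 f' g' + f g'' = 0`, then
`φ = f · (ψ ∘ g)` satisfies `-ε φ'' + C φ = -ε f'' (ψ ∘ g)`. -/
theorem langer_transformation
    (ε : ℂ) (B C : ℝ → ℂ) (g : ℝ → ℝ) (f ψ : ℝ → ℂ)
    (hg : Differentiable ℝ g) (hg' : Differentiable ℝ (deriv g))
    (hf : Differentiable ℝ f) (hf' : Differentiable ℝ (deriv f))
    (hψ : Differentiable ℝ ψ) (hψ' : Differentiable ℝ (deriv ψ))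
    (hAiry : ∀ y : ℝ, ε * deriv (deriv ψ) y = B y * ψ y)
    (hphase : ∀ x : ℝ, B (g x) * (Complex.ofReal (deriv g x)) ^ 2 = C x)
    (hamp : ∀ x : ℝ, 2 * deriv f x * Complex.ofReal (deriv g x) + f x * Complex.ofReal (deriv (deriv g) x) = 0) :
    ∀ x : ℝ,
      -ε * deriv (deriv (fun t => f t * ψ (g t))) x + C x * (f x * ψ (g x))
        = -ε * deriv (deriv f) x * ψ (g x) := by
  intro x
  -- first derivative of ψ ∘ g
  have hψg : ∀ y : ℝ, deriv (fun t => ψ (g t)) y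
      = ((deriv g y : ℝ) : ℂ) * deriv ψ (g y) := by
    intro y
    rw [show (fun t => ψ (g t)) = ψ ∘ g from rfl,
      deriv.scomp y (hψ (g y)) (hg y), Complex.real_smul]
  have hψgD : Differentiable ℝ (fun t => ψ (g t)) := hψ.comp hg
  have hψ'gD : Differentiable ℝ (fun t => deriv ψ (g t)) := hψ'.comp hg
  have hGD : Differentiable ℝ (fun t => ((deriv g t : ℝ) : ℂ)) := fun y =>
    ((hg' y).hasDerivAt.ofReal_comp).differentiableAt
  -- derivative of the coerced g'
  have hGd : ∀ y : ℝ, deriv (fun t => ((deriv g t : ℝ) : ℂ)) y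
      = ((deriv (deriv g) y : ℝ) : ℂ) := fun y =>
    ((hg' y).hasDerivAt.ofReal_comp).deriv
  -- derivative of ψ' ∘ g
  have hψ'g : ∀ y : ℝ, deriv (fun t => deriv ψ (g t)) y
      = ((deriv g y : ℝ) : ℂ) * deriv (deriv ψ) (g y) := by
    intro y
    rw [show (fun t => deriv ψ (g t)) = deriv ψ ∘ g from rfl,
      deriv.scomp y (hψ' (g y)) (hg y), Complex.real_smul]
  -- first derivative of φ
  have h1 : deriv (fun t => f t * ψ (g t))
      = fun y => deriv f y * ψ (g y)
        + f y * (((deriv g y : ℝ) : ℂ) * deriv ψ (g y)) := by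
    funext y
    rw [deriv_fun_mul (hf y) (hψgD y), hψg y]
  -- second derivative
  have h2 : deriv (deriv (fun t => f t * ψ (g t))) x
      = deriv (deriv f) x * ψ (g x)
        + deriv f x * (((deriv g x : ℝ) : ℂ) * deriv ψ (g x))
        + (deriv f x * (((deriv g x : ℝ) : ℂ) * deriv ψ (g x))
          + f x * (((deriv (deriv g) x : ℝ) : ℂ) * deriv ψ (g x)
            + ((deriv g x : ℝ) : ℂ)
              * (((deriv g x : ℝ) : ℂ) * deriv (deriv ψ) (g x)))) := by
    rw [h1]
    have d1 : DifferentiableAt ℝ (fun y => deriv f y * ψ (g y)) x :=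
      (hf' x).mul (hψgD x)
    have d2 : DifferentiableAt ℝ
        (fun y => f y * (((deriv g y : ℝ) : ℂ) * deriv ψ (g y))) x :=
      (hf x).mul ((hGD x).mul (hψ'gD x))
    rw [deriv_fun_add d1 d2, deriv_fun_mul (hf' x) (hψgD x), hψg x,
      deriv_fun_mul (hf x) (show DifferentiableAt ℝ (fun t => ((deriv g t : ℝ) : ℂ) * deriv ψ (g t)) x from (hGD x).mul (hψ'gD x)),
      deriv_fun_mul (hGD x) (hψ'gD x), hGd x, hψ'g x]
  rw [h2]
  linear_combination (-ε * deriv ψ (g x)) * hamp x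
    - (f x * ((deriv g x : ℝ) : ℂ) ^ 2) * hAiry (g x)
    - (f x * ψ (g x)) * hphase x
end

section
/- Let U : [0,∞) → ℂ be twice differentiable with U(x) ≠ c for all x ≥ 0, where c ∈ ℂ, and let α ∈ ℂ. Let φ₁, φ₂ : [0,∞) → ℂ be twice differentiable with (U − c) φ_j'' − U'' φ_j = 0 for j = 1,2 and φ₁ φ₂' − φ₁' φ₂ ≡ 1. Let f : [0,∞) → ℂ be continuous and suppose x ↦ e^{α x} φ₁(x) f(x)/(U(x) − c) and x ↦ e^{α x} φ₂(x) f(x)/(U(x) − c) are integrable on [0,∞). Define u_α(z) := −φ₁(z) e^{−α z} ∫₀^z e^{α x} φ₂(x) f(x)/(U(x) − c) dx − φ₂(z) e^{−α z} ∫_z^∞ e^{α x} φ₁(x) f(x)/(U(x) − c) dx. Then for all z ≥ 0, Ray_α(u_α)(z) = f(z) + Err(z), where Ray_α(ψ) := (U − c)(ψ'' − α² ψ) − U'' ψ and Err(z) := 2 α (U(z) − c) ( φ₁'(z) e^{−α z} ∫₀^z e^{α x} φ₂(x) f(x)/(U(x) − c) dx + φ₂'(z) e^{−α z} ∫_z^∞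 e^{α x} φ₁(x) f(x)/(U(x) − c) dx ). -/
open MeasureTheory Set

/-- One-sided derivative on the half line `[0, ∞)`. -/
noncomputable def dHalf (f : ℝ → ℂ) : ℝ → ℂ := derivWithin f (Set.Ici 0)

private lemma ftc_Ici (h : ℝ → ℂ) (hcont : ContinuousOn h (Set.Ici 0))
    (hint : IntegrableOn h (Set.Ici 0)) {b : ℝ} (hb : b ∈ Set.Ici (0:ℝ)) :
    HasDerivWithinAt (fun u => ∫ x in (0:ℝ)..u, h x) (h b) (Set.Ici 0) b := by
  have hb0 : (0:ℝ) ≤ b := hb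
  have hii : IntervalIntegrable h volume 0 b :=
    (hint.mono_set (by rw [Set.uIcc_of_le hb0]; exact Set.Icc_subset_Ici_self)).intervalIntegrable
  rcases eq_or_lt_of_le hb0 with h0 | h0
  · subst h0
    exact intervalIntegral.integral_hasDerivWithinAt_right (s := Set.Ici 0) (t := Set.Ioi 0) hii
      ⟨Set.Ici 0, Filter.mem_of_superset self_mem_nhdsWithin Set.Ioi_subset_Ici_self,
        hint.aestronglyMeasurable⟩
      ((hcont 0 Set.self_mem_Ici).mono Set.Ioi_subset_Ici_self)
  · exact (intervalIntegral.integral_hasDerivAt_right hii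
      ⟨Set.Ici 0, Ici_mem_nhds h0, hint.aestronglyMeasurable⟩
      (hcont.continuousAt (Ici_mem_nhds h0))).hasDerivWithinAt

private lemma ioi_split (h : ℝ → ℂ) (hint : IntegrableOn h (Set.Ici 0)) {t : ℝ} (ht : 0 ≤ t) :
    (∫ x in Set.Ioi t, h x) = (∫ x in Set.Ioi 0, h x) - ∫ x in (0:ℝ)..t, h x := by
  have h1 : IntegrableOn h (Set.Ioc 0 t) := hint.mono_set (fun x hx => le_of_lt hx.1)
  have h2 : IntegrableOn h (Set.Ioi t) :=
    hint.mono_set (fun x hx => le_trans ht (le_of_lt hx))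
  have hu := MeasureTheory.setIntegral_union (Set.Ioc_disjoint_Ioi le_rfl)
      measurableSet_Ioi h1 h2
  rw [Set.Ioc_union_Ioi_eq_Ioi ht] at hu
  rw [intervalIntegral.integral_of_le ht, hu]
  ring

/-- The approximate Rayleigh solver for `α ≠ 0`:
`Ray_α(u_α) = f + Err` where `u_α` is built from the exponentially weighted Green
kernel `e^{-α(z-x)} G_{R,0}(x,z)` and the error is of order `O(α)`. -/
theorem raySolver_alpha_approximate
    (U φ₁ φ₂ f : ℝ → ℂ) (c α : ℂ)
    (hUc : ∀ x ∈ Set.Ici (0:ℝ), U x ≠ c)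
    (hU : DifferentiableOn ℝ U (Set.Ici 0))
    (hU' : DifferentiableOn ℝ (dHalf U) (Set.Ici 0))
    (hφ₁ : DifferentiableOn ℝ φ₁ (Set.Ici 0))
    (hφ₁' : DifferentiableOn ℝ (dHalf φ₁) (Set.Ici 0))
    (hφ₂ : DifferentiableOn ℝ φ₂ (Set.Ici 0))
    (hφ₂' : DifferentiableOn ℝ (dHalf φ₂) (Set.Ici 0))
    (hode₁ : ∀ z ∈ Set.Ici (0:ℝ),
      (U z - c) * dHalf (dHalf φ₁) z - dHalf (dHalf U) z * φ₁ z = 0)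
    (hode₂ : ∀ z ∈ Set.Ici (0:ℝ),
      (U z - c) * dHalf (dHalf φ₂) z - dHalf (dHalf U) z * φ₂ z = 0)
    (hW : ∀ z ∈ Set.Ici (0:ℝ), φ₁ z * dHalf φ₂ z - dHalf φ₁ z * φ₂ z = 1)
    (hf : ContinuousOn f (Set.Ici 0))
    (hint₁ : IntegrableOn
      (fun x : ℝ => Complex.exp (α * x) * φ₁ x * f x / (U x - c)) (Set.Ici 0))
    (hint₂ : IntegrableOn
      (fun x : ℝ => Complex.exp (α * x) * φ₂ x * f x / (U x - c)) (Set.Ici 0)) :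
    ∀ z ∈ Set.Ici (0:ℝ),
      (U z - c)
          * (dHalf (dHalf (fun t =>
              -φ₁ t * Complex.exp (-α * t)
                  * (∫ x in (0:ℝ)..t, Complex.exp (α * x) * φ₂ x * f x / (U x - c))
                - φ₂ t * Complex.exp (-α * t)
                  * ∫ x in Set.Ioi t, Complex.exp (α * x) * φ₁ x * f x / (U x - c))) z
            - α ^ 2
              * (-φ₁ z * Complex.exp (-α * z)
                  * (∫ x in (0:ℝ)..z, Complex.exp (α * x) * φ₂ x * f x / (U x - c))
                - φ₂ z * Complex.exp (-α * z)
                  * ∫ x in Set.Ioi z, Complex.exp (α * x) * φ₁ x * f x / (U x - c)))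
        - dHalf (dHalf U) z
            * (-φ₁ z * Complex.exp (-α * z)
                * (∫ x in (0:ℝ)..z, Complex.exp (α * x) * φ₂ x * f x / (U x - c))
              - φ₂ z * Complex.exp (-α * z)
                * ∫ x in Set.Ioi z, Complex.exp (α * x) * φ₁ x * f x / (U x - c))
      = f z
        + 2 * α * (U z - c)
            * (dHalf φ₁ z * Complex.exp (-α * z)
                * (∫ x in (0:ℝ)..z, Complex.exp (α * x) * φ₂ x * f x / (U x - c))
              + dHalf φ₂ z * Complex.exp (-α * z)
                * ∫ x in Set.Ioi z, Complex.exp (α * x) * φ₁ x * f x / (U x - c)) := by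
  intro z hz
  have hne : U z - c ≠ 0 := sub_ne_zero.mpr (hUc z hz)
  have hexp : Continuous fun x : ℝ => Complex.exp (α * x) :=
    Complex.continuous_exp.comp (continuous_const.mul Complex.continuous_ofReal)
  have hcont₁ : ContinuousOn
      (fun x : ℝ => Complex.exp (α * x) * φ₁ x * f x / (U x - c)) (Set.Ici 0) :=
    ((hexp.continuousOn.mul hφ₁.continuousOn).mul hf).div
      (hU.continuousOn.sub continuousOn_const) (fun x hx => sub_ne_zero.mpr (hUc x hx))
  have hcont₂ : ContinuousOn
      (fun x : ℝ => Complex.exp (α * x) * φ₂ x * f x / (U x - c)) (Set.Ici 0) :=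
    ((hexp.continuousOn.mul hφ₂.continuousOn).mul hf).div
      (hU.continuousOn.sub continuousOn_const) (fun x hx => sub_ne_zero.mpr (hUc x hx))
  -- derivative of the exponential weight
  have hE : ∀ t : ℝ, HasDerivAt (fun s : ℝ => Complex.exp (-α * s))
      (-α * Complex.exp (-α * t)) t := by
    intro t
    have h1 : HasDerivAt (fun s : ℝ => -α * (s : ℂ)) (-α) t := by
      simpa using (Complex.ofRealCLM.hasDerivAt (x := t)).const_mul (-α)
    simpa [mul_comm] using h1.cexp
  -- derivative of the two integral factors
  have hG₂ : ∀ t ∈ Set.Ici (0:ℝ), HasDerivWithinAt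
      (fun s : ℝ => ∫ x in (0:ℝ)..s, Complex.exp (α * x) * φ₂ x * f x / (U x - c))
      (Complex.exp (α * t) * φ₂ t * f t / (U t - c)) (Set.Ici 0) t :=
    fun t ht => ftc_Ici _ hcont₂ hint₂ ht
  have hG₁ : ∀ t ∈ Set.Ici (0:ℝ), HasDerivWithinAt
      (fun s : ℝ => ∫ x in Set.Ioi s, Complex.exp (α * x) * φ₁ x * f x / (U x - c))
      (-(Complex.exp (α * t) * φ₁ t * f t / (U t - c))) (Set.Ici 0) t := by
    intro t ht
    exact ((ftc_Ici _ hcont₁ hint₁ ht).const_sub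
        (∫ x in Set.Ioi (0:ℝ), Complex.exp (α * x) * φ₁ x * f x / (U x - c))).congr
      (fun s hs => ioi_split _ hint₁ hs) (ioi_split _ hint₁ ht)
  -- first derivative of u
  have huderiv : ∀ t ∈ Set.Ici (0:ℝ), HasDerivWithinAt
      (fun t => -φ₁ t * Complex.exp (-α * t)
          * (∫ x in (0:ℝ)..t, Complex.exp (α * x) * φ₂ x * f x / (U x - c))
        - φ₂ t * Complex.exp (-α * t)
          * ∫ x in Set.Ioi t, Complex.exp (α * x) * φ₁ x * f x / (U x - c))
      (-dHalf φ₁ t * Complex.exp (-α * t)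
          * (∫ x in (0:ℝ)..t, Complex.exp (α * x) * φ₂ x * f x / (U x - c))
        - dHalf φ₂ t * Complex.exp (-α * t)
          * (∫ x in Set.Ioi t, Complex.exp (α * x) * φ₁ x * f x / (U x - c))
        - α * (-φ₁ t * Complex.exp (-α * t)
          * (∫ x in (0:ℝ)..t, Complex.exp (α * x) * φ₂ x * f x / (U x - c))
        - φ₂ t * Complex.exp (-α * t)
          * ∫ x in Set.Ioi t, Complex.exp (α * x) * φ₁ x * f x / (U x - c)))
      (Set.Ici 0) t := by
    intro t ht
    have A1 : HasDerivWithinAt φ₁ (dHalf φ₁ t) (Set.Ici 0) t := (hφ₁ t ht).hasDerivWithinAt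
    have A2 : HasDerivWithinAt φ₂ (dHalf φ₂ t) (Set.Ici 0) t := (hφ₂ t ht).hasDerivWithinAt
    have HE := (hE t).hasDerivWithinAt (s := Set.Ici 0)
    have H := ((A1.neg.mul HE).mul (hG₂ t ht)).sub ((A2.mul HE).mul (hG₁ t ht))
    convert H using 1
    · rfl
    · rfl
    · simp only [Pi.neg_apply, Pi.mul_apply]
      ring
  -- the first derivative function
  have hdu : ∀ t ∈ Set.Ici (0:ℝ), dHalf
      (fun t => -φ₁ t * Complex.exp (-α * t)
          * (∫ x in (0:ℝ)..t, Complex.exp (α * x) * φ₂ x * f x / (U x - c))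
        - φ₂ t * Complex.exp (-α * t)
          * ∫ x in Set.Ioi t, Complex.exp (α * x) * φ₁ x * f x / (U x - c)) t
      = -dHalf φ₁ t * Complex.exp (-α * t)
          * (∫ x in (0:ℝ)..t, Complex.exp (α * x) * φ₂ x * f x / (U x - c))
        - dHalf φ₂ t * Complex.exp (-α * t)
          * (∫ x in Set.Ioi t, Complex.exp (α * x) * φ₁ x * f x / (U x - c))
        - α * (-φ₁ t * Complex.exp (-α * t)
          * (∫ x in (0:ℝ)..t, Complex.exp (α * x) * φ₂ x * f x / (U x - c))
        - φ₂ t * Complex.exp (-α * t)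
          * ∫ x in Set.Ioi t, Complex.exp (α * x) * φ₁ x * f x / (U x - c)) :=
    fun t ht => (huderiv t ht).derivWithin (uniqueDiffOn_Ici 0 t ht)
  -- second derivative at z
  have hsecond : dHalf (dHalf
      (fun t => -φ₁ t * Complex.exp (-α * t)
          * (∫ x in (0:ℝ)..t, Complex.exp (α * x) * φ₂ x * f x / (U x - c))
        - φ₂ t * Complex.exp (-α * t)
          * ∫ x in Set.Ioi t, Complex.exp (α * x) * φ₁ x * f x / (U x - c))) z
      = -(dHalf (dHalf φ₁) z) * Complex.exp (-α * z)
          * (∫ x in (0:ℝ)..z, Complex.exp (α * x) * φ₂ x * f x / (U x - c))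
        - (dHalf (dHalf φ₂) z) * Complex.exp (-α * z)
          * (∫ x in Set.Ioi z, Complex.exp (α * x) * φ₁ x * f x / (U x - c))
        + 2 * α * (dHalf φ₁ z * Complex.exp (-α * z)
            * (∫ x in (0:ℝ)..z, Complex.exp (α * x) * φ₂ x * f x / (U x - c))
          + dHalf φ₂ z * Complex.exp (-α * z)
            * (∫ x in Set.Ioi z, Complex.exp (α * x) * φ₁ x * f x / (U x - c)))
        + f z / (U z - c)
        + α ^ 2 * (-φ₁ z * Complex.exp (-α * z)
            * (∫ x in (0:ℝ)..z, Complex.exp (α * x) * φ₂ x * f x / (U x - c))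
          - φ₂ z * Complex.exp (-α * z)
            * ∫ x in Set.Ioi z, Complex.exp (α * x) * φ₁ x * f x / (U x - c)) := by
    have B1 : HasDerivWithinAt (dHalf φ₁) (dHalf (dHalf φ₁) z) (Set.Ici 0) z :=
      (hφ₁' z hz).hasDerivWithinAt
    have B2 : HasDerivWithinAt (dHalf φ₂) (dHalf (dHalf φ₂) z) (Set.Ici 0) z :=
      (hφ₂' z hz).hasDerivWithinAt
    have HE := (hE z).hasDerivWithinAt (s := Set.Ici 0)
    have H := (((B1.neg.mul HE).mul (hG₂ z hz)).sub ((B2.mul HE).mul (hG₁ z hz))).sub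
      ((huderiv z hz).const_mul α)
    have hEe : Complex.exp (-α * z) * Complex.exp (α * z) = 1 := by
      rw [← Complex.exp_add, show -α * (z:ℂ) + α * z = 0 by ring, Complex.exp_zero]
    have hWz := hW z hz
    refine Eq.trans (Eq.trans
      (derivWithin_congr (s := Set.Ici 0) (fun t ht => hdu t ht) (hdu z hz))
      (H.derivWithin (uniqueDiffOn_Ici 0 z hz))) ?_
    simp only [Pi.neg_apply, Pi.mul_apply]
    linear_combination (Complex.exp (-α * z) * Complex.exp (α * z) * (f z / (U z - c))) * hWz
      + (f z / (U z - c)) * hEe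
  rw [hsecond]
  have h1 := hode₁ z hz
  have h2 := hode₂ z hz
  have hfUc : f z / (U z - c) * (U z - c) = f z := div_mul_cancel₀ _ hne
  linear_combination
    (-(Complex.exp (-α * z)
        * (∫ x in (0:ℝ)..z, Complex.exp (α * x) * φ₂ x * f x / (U x - c)))) * h1
    + (-(Complex.exp (-α * z)
        * (∫ x in Set.Ioi z, Complex.exp (α * x) * φ₁ x * f x / (U x - c)))) * h2
    + hfUc
end
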